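/- arXiv:2009.05544 — 2 statements merged into one kernel-verified Lean document; each statement's English description precedes it below -/
import Mathlib

section
/- Let (Θ, d) be a metric space, let θ₀ ∈ Θ be given, and let (E, E₊) be an ordered Banach space with the positive cone E₊ normal and reproducing. For each θ ∈ Θ \ {θ₀}, let B_θ be a resolvent positive operator on E with s(B_θ) < 0 and let C_θ be a positive bounded linear operator on E. Assume: (i) for every μ > 0 and every θ ∈ Θ \ {θ₀}, B_θ + (1/μ)C_θ is a resolvent positive operator on E; and (ii) for every μ > 0, limsup_{θ → θ₀} s(B_θ + (1/μ)C_θ) < 0. Then lim_{θ → θ₀} r(−(B_θ)⁻¹C_θ) = 0. -/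
open Filter Topology

noncomputable section

variable {E : Type*} [NormedAddCommGroup E] [NormedSpace ℝ E]

/-- A (closed, convex, pointed) positive cone in a Banach space, making it an ordered Banach
space with order `x ≤ y ↔ y - x ∈ carrier`. -/
structure BanachCone (E : Type*) [NormedAddCommGroup E] [NormedSpace ℝ E] where
  carrier : Set E
  isClosed : IsClosed carrier
  zero_mem : (0 : E) ∈ carrier
  add_mem : ∀ x ∈ carrier, ∀ y ∈ carrier, x + y ∈ carrier
  smul_mem : ∀ c : ℝ, 0 ≤ c → ∀ x ∈ carrier, c • x ∈ carrier
  pointed : ∀ x ∈ carrier, -x ∈ carrier → x = 0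

/-- The cone is normal: `0 ≤ x ≤ y` implies `‖x‖ ≤ c ‖y‖` for some fixed `c > 0`. -/
def BanachCone.Normal (K : BanachCone E) : Prop :=
  ∃ c : ℝ, 0 < c ∧ ∀ x y : E, x ∈ K.carrier → y - x ∈ K.carrier → ‖x‖ ≤ c * ‖y‖

/-- The cone is reproducing: `E = E₊ - E₊`. -/
def BanachCone.Reproducing (K : BanachCone E) : Prop :=
  ∀ z : E, ∃ x ∈ K.carrier, ∃ y ∈ K.carrier, z = x - y

/-- A bounded linear operator is positive if it maps the cone into itself. -/
def IsPositiveOp (K : BanachCone E) (A : E →L[ℝ] E) : Prop :=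
  ∀ x ∈ K.carrier, A x ∈ K.carrier

/-- `R` is the (bounded) resolvent of the (possibly unbounded) linear operator `B` at `lam`,
i.e. `R = (lam - B)⁻¹`. -/
structure IsResolventAt (B : E →ₗ.[ℝ] E) (lam : ℝ) (R : E →L[ℝ] E) : Prop where
  mem : ∀ y : E, R y ∈ B.domain
  right_inv : ∀ y : E, lam • (R y) - B ⟨R y, mem y⟩ = y
  left_inv : ∀ x : B.domain, R (lam • (x : E) - B x) = (x : E)

/-- A closed operator is resolvent positive if its resolvent set contains a ray `(w, ∞)` on which
the resolvent is a positive operator. -/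
def IsResolventPositive (K : BanachCone E) (B : E →ₗ.[ℝ] E) : Prop :=
  IsClosed (B.graph : Set (E × E)) ∧
  ∃ w : ℝ, ∀ lam : ℝ, w < lam →
    ∃ R : E →L[ℝ] E, IsResolventAt B lam R ∧ IsPositiveOp K R

/-- The spectral bound `s(B) = sup {lam : lam ∈ σ(B)}` of an operator, as an extended real
(`⊥` if the spectrum is empty). -/
noncomputable def spectralBound (B : E →ₗ.[ℝ] E) : EReal :=
  sSup {z : EReal | ∃ lam : ℝ, z = (lam : EReal) ∧
    ¬ ∃ R : E →L[ℝ] E, IsResolventAt B lam R}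

/-- The perturbation `B + C` of an (unbounded) operator `B` by a bounded operator `C`. -/
def addBounded (B : E →ₗ.[ℝ] E) (C : E →L[ℝ] E) : E →ₗ.[ℝ] E :=
  { domain := B.domain
    toFun := B.toFun + (C.toLinearMap.comp B.domain.subtype) }

/-- Spectral radius of a bounded operator, via the Gelfand formula `inf_n ‖A^n‖^{1/n}`. -/
noncomputable def opSpecRad (A : E →L[ℝ] E) : ℝ :=
  ⨅ k : ℕ, ‖A ^ (k + 1)‖ ^ ((1 : ℝ) / ((k : ℝ) + 1))

-- ===== auxiliary lemmas added for the proof =====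

set_option maxHeartbeats 1000000
set_option synthInstance.maxHeartbeats 1000000

theorem resolvent_unique {B : E →ₗ.[ℝ] E} {lam : ℝ} {R₁ R₂ : E →L[ℝ] E}
    (h₁ : IsResolventAt B lam R₁) (h₂ : IsResolventAt B lam R₂) : R₁ = R₂ := by
  ext y
  have e1 := h₂.right_inv y
  have e2 := h₁.left_inv ⟨R₂ y, h₂.mem y⟩
  calc R₁ y = R₁ (lam • (R₂ y) - B ⟨R₂ y, h₂.mem y⟩) := by rw [e1]
  _ = R₂ y := e2

theorem exists_resolvent_of_sb_neg {B : E →ₗ.[ℝ] E} (h : spectralBound B < 0) :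
    ∀ lam : ℝ, 0 ≤ lam → ∃ R : E →L[ℝ] E, IsResolventAt B lam R := by
  intro lam hlam
  by_contra hc
  have h1 : (lam : EReal) ≤ spectralBound B := le_sSup ⟨lam, rfl, hc⟩
  have h0 : (0 : EReal) ≤ (lam : EReal) := by exact_mod_cast hlam
  exact absurd (lt_of_le_of_lt (h0.trans h1) h) (lt_irrefl _)

theorem opSpecRad_nonneg (A : E →L[ℝ] E) : 0 ≤ opSpecRad A :=
  Real.iInf_nonneg fun _ => Real.rpow_nonneg (norm_nonneg _) _

theorem IsPositiveOp.pow' {K : BanachCone E} {T : E →L[ℝ] E} (h : IsPositiveOp K T) :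
    ∀ n : ℕ, IsPositiveOp K (T ^ n) := by
  intro n
  induction n with
  | zero => intro z hz; simpa using hz
  | succ n ih =>
    intro z hz
    have hps : (T ^ (n + 1)) z = T ((T ^ n) z) := by
      rw [pow_succ', ContinuousLinearMap.mul_apply]
    rw [hps]
    exact h _ (ih z hz)

theorem neumann [CompleteSpace E] [Nontrivial E] (K : BanachCone E) {B : E →ₗ.[ℝ] E}
    {μ lam : ℝ} {S : E →L[ℝ] E} (hS : IsResolventAt B μ S) (h : |μ - lam| * ‖S‖ < 1) :
    ∃ R : E →L[ℝ] E, IsResolventAt B lam R ∧ ‖R‖ ≤ ‖S‖ * (1 - |μ - lam| * ‖S‖)⁻¹ ∧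
      (lam ≤ μ → IsPositiveOp K S → IsPositiveOp K R) := by
  obtain ⟨t, ht⟩ : ∃ t : E →L[ℝ] E, t = (μ - lam) • S := ⟨_, rfl⟩
  have htnorm : ‖t‖ = |μ - lam| * ‖S‖ := by
    rw [ht]
    have h9 := norm_smul (μ - lam) S
    rwa [Real.norm_eq_abs] at h9
  have htn : ‖t‖ < 1 := by rw [htnorm]; exact h
  obtain ⟨v, hv⟩ : ∃ v : E →L[ℝ] E, v = ∑' n : ℕ, t ^ n := ⟨_, rfl⟩
  have hv1 : (1 - t) * v = 1 := by rw [hv]; exact mul_neg_geom_series t htn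
  have hv2 : v * (1 - t) = 1 := by rw [hv]; exact geom_series_mul_neg t htn
  have hc0 : (1 - t) * S = S * (1 - t) := by
    simp only [sub_mul, mul_sub, one_mul, mul_one, ht, smul_mul_assoc, mul_smul_comm]
  have hcm : S * v = v * S := by
    calc S * v = v * ((1 - t) * (S * v)) := by rw [← mul_assoc, ← mul_assoc, hv2, one_mul]
    _ = v * (S * ((1 - t) * v)) := by rw [← mul_assoc (1-t), hc0, mul_assoc]
    _ = v * S := by rw [hv1, mul_one]
  have hmem : ∀ y : E, (S * v) y ∈ B.domain := by
    intro y; rw [ContinuousLinearMap.mul_apply]; exact hS.mem _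
  have honevx : ∀ z : E, (1 - t) z = z - (μ - lam) • S z := by
    intro z
    simp [ContinuousLinearMap.sub_apply, ContinuousLinearMap.smul_apply,
      ContinuousLinearMap.one_apply, ht]
  refine ⟨S * v, ⟨hmem, ?_, ?_⟩, ?_, ?_⟩
  · -- right_inv
    intro y
    have hy : (1 - t) (v y) = y := by
      have h1 := congrArg (fun A : E →L[ℝ] E => A y) hv1
      simpa [ContinuousLinearMap.mul_apply] using h1
    have h2 := hS.right_inv (v y)
    have h3 : B ⟨S (v y), hS.mem (v y)⟩ = μ • S (v y) - v y := by
      rw [sub_eq_iff_eq_add.1 h2]; abel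
    show lam • S (v y) - B ⟨S (v y), hS.mem (v y)⟩ = y
    rw [h3]
    have h4 : lam • S (v y) - (μ • S (v y) - v y) = (1 - t) (v y) := by
      rw [honevx, sub_smul]; abel
    rw [h4, hy]
  · -- left_inv
    intro x
    have h4 := hS.left_inv x
    have h5 : S (lam • (x : E) - B x) = (1 - t) (x : E) := by
      have h6 : lam • (x : E) - B x = (μ • (x : E) - B x) - (μ - lam) • (x : E) := by
        rw [sub_smul]; abel
      rw [h6, map_sub, h4, map_smul, honevx]
    have h7 : v ((1 - t) (x : E)) = (x : E) := by
      have h8 := congrArg (fun A : E →L[ℝ] E => A (x : E)) hv2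
      simpa [ContinuousLinearMap.mul_apply] using h8
    show (S * v) (lam • (x : E) - B x) = (x : E)
    rw [hcm, ContinuousLinearMap.mul_apply, h5, h7]
  · -- norm bound
    have hb : ∀ n : ℕ, ‖t ^ n‖ ≤ ‖t‖ ^ n := by
      intro n
      cases n with
      | zero => simp
      | succ n => exact norm_pow_le' t n.succ_pos
    have hgs : Summable (fun n : ℕ => ‖t‖ ^ n) :=
      summable_geometric_of_lt_one (norm_nonneg t) htn
    have hsn : Summable (fun n : ℕ => ‖t ^ n‖) :=
      Summable.of_nonneg_of_le (fun n => norm_nonneg _) hb hgs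
    have hvb : ‖v‖ ≤ (1 - |μ - lam| * ‖S‖)⁻¹ := by
      calc ‖v‖ ≤ ∑' n : ℕ, ‖t ^ n‖ := by rw [hv]; exact norm_tsum_le_tsum_norm hsn
      _ ≤ ∑' n : ℕ, ‖t‖ ^ n := Summable.tsum_le_tsum hb hsn hgs
      _ = (1 - ‖t‖)⁻¹ := tsum_geometric_of_lt_one (norm_nonneg t) htn
      _ = (1 - |μ - lam| * ‖S‖)⁻¹ := by rw [htnorm]
    calc ‖S * v‖ ≤ ‖S‖ * ‖v‖ := norm_mul_le _ _
    _ ≤ ‖S‖ * (1 - |μ - lam| * ‖S‖)⁻¹ := by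
        exact mul_le_mul_of_nonneg_left hvb (norm_nonneg S)
  · -- positivity
    intro hle hSpos x hx
    have hsum : Summable (fun n : ℕ => t ^ n) := summable_geometric_of_norm_lt_one htn
    have happ : HasSum (fun n : ℕ => (t ^ n) x) (v x) := by
      rw [hv]
      simpa using hsum.hasSum.mapL (ContinuousLinearMap.apply ℝ E x)
    have htpos : IsPositiveOp K t := by
      intro z hz
      have : t z = (μ - lam) • S z := by
        simp [ht, ContinuousLinearMap.smul_apply]
      rw [this]
      exact K.smul_mem _ (sub_nonneg.2 hle) _ (hSpos z hz)
    have htpow : ∀ n : ℕ, IsPositiveOp K (t ^ n) := by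
      intro n
      induction n with
      | zero => intro z hz; simpa using hz
      | succ n ih =>
        intro z hz
        have hps : (t ^ (n + 1)) z = t ((t ^ n) z) := by
          rw [pow_succ', ContinuousLinearMap.mul_apply]
        rw [hps]
        exact htpos _ (ih z hz)
    have hpartial : ∀ N : ℕ, (∑ n ∈ Finset.range N, (t ^ n) x) ∈ K.carrier := by
      intro N
      induction N with
      | zero => simpa using K.zero_mem
      | succ N ih =>
        rw [Finset.sum_range_succ]
        exact K.add_mem _ ih _ (htpow N x hx)
    have hvx : v x ∈ K.carrier :=
      K.isClosed.mem_of_tendsto happ.tendsto_sum_nat (Filter.Eventually.of_forall hpartial)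
    show (S * v) x ∈ K.carrier
    rw [ContinuousLinearMap.mul_apply]
    exact hSpos _ hvx

theorem isPos_of_ray [CompleteSpace E] [Nontrivial E] (K : BanachCone E) {B : E →ₗ.[ℝ] E}
    (hray : ∃ w : ℝ, ∀ lam : ℝ, w < lam →
      ∃ R : E →L[ℝ] E, IsResolventAt B lam R ∧ IsPositiveOp K R)
    (hres : ∀ lam : ℝ, 0 ≤ lam → ∃ R : E →L[ℝ] E, IsResolventAt B lam R) :
    ∃ R : E →L[ℝ] E, IsResolventAt B 0 R ∧ IsPositiveOp K R := by
  obtain ⟨w, hw⟩ := hray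
  set P : ℝ → Prop := fun lam => ∃ R : E →L[ℝ] E, IsResolventAt B lam R ∧ IsPositiveOp K R
    with hP
  set U : Set ℝ := {lam : ℝ | 0 ≤ lam ∧ ∀ ν : ℝ, lam ≤ ν → P ν} with hU
  have hU1 : (max w 0 + 1) ∈ U := by
    constructor
    · have := le_max_right w 0; linarith
    · intro ν hν
      exact hw ν (by have := le_max_left w 0; linarith)
  have hUbdd : BddBelow U := ⟨0, fun u hu => hu.1⟩
  set m : ℝ := sInf U with hm
  have hm0 : 0 ≤ m := le_csInf ⟨_, hU1⟩ (fun u hu => hu.1)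
  have hgt : ∀ ν : ℝ, m < ν → P ν := by
    intro ν hν
    obtain ⟨u, hu, hu'⟩ := exists_lt_of_csInf_lt ⟨_, hU1⟩ hν
    exact hu.2 ν hu'.le
  obtain ⟨Rm, hRm⟩ := hres m hm0
  have hb : 0 < ‖Rm‖ := by
    rcases (norm_nonneg Rm).lt_or_eq with hh | hh
    · exact hh
    · exfalso
      have hRm0 : Rm = 0 := by rwa [eq_comm, norm_eq_zero] at hh
      obtain ⟨y, hy⟩ := exists_ne (0 : E)
      have h2 := hRm.right_inv y
      have hz : (⟨Rm y, hRm.mem y⟩ : B.domain) = 0 := Subtype.ext (by simp [hRm0])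
      rw [hz, LinearPMap.map_zero] at h2
      rw [hRm0] at h2
      simp at h2
      exact hy h2.symm
  set b : ℝ := ‖Rm‖ with hbdef
  set ν : ℝ := m + 1 / (3 * b) with hν
  have hbne : b ≠ 0 := ne_of_gt hb
  have hc1 : |m - ν| * b = 1 / 3 := by
    rw [show m - ν = -(1 / (3 * b)) by rw [hν]; ring, abs_neg, abs_of_pos (by positivity)]
    field_simp
  obtain ⟨Rν', hRν', hnorm', _⟩ := neumann K hRm (lam := ν) (by rw [hc1]; norm_num)
  obtain ⟨Rν, hRν, hRνpos⟩ := hgt ν (by rw [hν, lt_add_iff_pos_right]; positivity)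
  have hRνeq : Rν = Rν' := resolvent_unique hRν hRν'
  have hnormν : ‖Rν‖ ≤ 3 / 2 * b := by
    rw [hRνeq]
    calc ‖Rν'‖ ≤ b * (1 - |m - ν| * b)⁻¹ := hnorm'
    _ = 3 / 2 * b := by rw [hc1]; norm_num; ring
  set lam' : ℝ := max 0 (m - 1 / (6 * b)) with hlam'
  have harith : ν - lam' ≤ 1 / (2 * b) := by
    have h1 : m - 1 / (6 * b) ≤ lam' := le_max_right _ _
    have h2 : 1 / (3 * b) + 1 / (6 * b) = 1 / (2 * b) := by field_simp; ring
    rw [hν]; linarith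
  have key : ∀ lam : ℝ, lam' ≤ lam → P lam := by
    intro lam hlam
    rcases le_or_gt lam ν with hcas | hcas
    · have habs : |ν - lam| = ν - lam := abs_of_nonneg (by linarith)
      have hprod : |ν - lam| * ‖Rν‖ < 1 := by
        have h3 : |ν - lam| * ‖Rν‖ ≤ (1 / (2 * b)) * (3 / 2 * b) := by
          apply mul_le_mul (by rw [habs]; linarith) hnormν (norm_nonneg _) (by positivity)
        have h4 : (1 / (2 * b)) * (3 / 2 * b) = 3 / 4 := by field_simp; ring
        rw [h4] at h3
        linarith
      obtain ⟨R, hR, _, hpos⟩ := neumann K hRν hprod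
      exact ⟨R, hR, hpos hcas hRνpos⟩
    · refine hgt lam (lt_trans ?_ hcas)
      rw [hν]
      have : 0 < 1 / (3 * b) := by positivity
      linarith
  have hmle : m ≤ lam' := csInf_le hUbdd ⟨le_max_left _ _, key⟩
  have hm00 : m = 0 := by
    rcases max_cases (0 : ℝ) (m - 1 / (6 * b)) with ⟨hc, _⟩ | ⟨hc, _⟩
    · rw [hlam', hc] at hmle; linarith
    · rw [hlam', hc] at hmle
      have : 0 < 1 / (6 * b) := by positivity
      linarith
  apply key 0
  rw [hlam', hm00]
  apply max_le le_rfl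
  have : 0 < 1 / (6 * b) := by positivity
  linarith

theorem opSpecRad_le_of_pos [CompleteSpace E] (K : BanachCone E) (hKn : K.Normal)
    (hKr : K.Reproducing) {B : E →ₗ.[ℝ] E} {C R Q : E →L[ℝ] E} {μ μ' : ℝ} (hμ : 0 < μ)
    (hR : IsResolventAt B 0 R) (hRpos : IsPositiveOp K R) (hCpos : IsPositiveOp K C)
    (hQ : IsResolventAt (addBounded B ((1 / μ) • C)) 0 Q) (hQpos : IsPositiveOp K Q)
    (hμ' : μ < μ') : opSpecRad (R.comp C) ≤ μ' := by
  obtain ⟨c, hc, hnc⟩ := hKn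
  obtain ⟨T, hT⟩ : ∃ T : E →L[ℝ] E, T = (1 / μ) • (R.comp C) := ⟨_, rfl⟩
  have hTapp : ∀ z : E, T z = (1 / μ) • (R (C z)) := by
    intro z
    rw [hT]
    simp [ContinuousLinearMap.smul_apply, ContinuousLinearMap.comp_apply]
  have star : ∀ y : E, Q y = R y + T (Q y) := by
    intro y
    have hqmem : Q y ∈ B.domain := hQ.mem y
    have h1 : (0 : ℝ) • Q y - (B ⟨Q y, hqmem⟩ + (1 / μ) • C (Q y)) = y := hQ.right_inv y
    have h3 : (0 : ℝ) • Q y - B ⟨Q y, hqmem⟩ = y + (1 / μ) • C (Q y) := by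
      rw [sub_add_eq_sub_sub] at h1
      exact sub_eq_iff_eq_add.mp h1
    have h4 : R ((0 : ℝ) • (Q y) - B ⟨Q y, hqmem⟩) = Q y := hR.left_inv ⟨Q y, hqmem⟩
    rw [h3, map_add, map_smul] at h4
    have h5 : T (Q y) = (1 / μ) • R (C (Q y)) := hTapp _
    rw [h5]
    exact h4.symm
  have iter : ∀ n : ℕ, ∀ y : E,
      Q y = (∑ k ∈ Finset.range n, (T ^ k) (R y)) + (T ^ n) (Q y) := by
    intro n
    induction n with
    | zero => intro y; simp
    | succ n ih =>
      intro y
      have h6 : (T ^ n) (Q y) = (T ^ n) (R y) + (T ^ (n + 1)) (Q y) := by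
        calc (T ^ n) (Q y) = (T ^ n) (R y + T (Q y)) := by rw [← star y]
        _ = (T ^ n) (R y) + (T ^ n) (T (Q y)) := map_add _ _ _
        _ = (T ^ n) (R y) + (T ^ (n + 1)) (Q y) := by
            rw [pow_succ, ContinuousLinearMap.mul_apply]
      calc Q y = ∑ k ∈ Finset.range n, (T ^ k) (R y) + (T ^ n) (Q y) := ih y
      _ = ∑ k ∈ Finset.range n, (T ^ k) (R y)
          + ((T ^ n) (R y) + (T ^ (n + 1)) (Q y)) := by rw [h6]
      _ = ∑ k ∈ Finset.range (n + 1), (T ^ k) (R y) + (T ^ (n + 1)) (Q y) := by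
          rw [Finset.sum_range_succ]; abel
  have hTpos : IsPositiveOp K T := by
    intro x hx
    rw [hTapp x]
    exact K.smul_mem _ (by positivity) _ (hRpos _ (hCpos _ hx))
  have hTpow := hTpos.pow'
  have hsumpos : ∀ x ∈ K.carrier, ∀ n : ℕ,
      (∑ k ∈ Finset.range n, (T ^ k) (R x)) ∈ K.carrier := by
    intro x hx n
    induction n with
    | zero => simpa using K.zero_mem
    | succ n ih =>
      rw [Finset.sum_range_succ]
      exact K.add_mem _ ih _ (hTpow n _ (hRpos x hx))
  have hbound : ∀ (n : ℕ), ∀ x ∈ K.carrier, ‖(T ^ n) (R x)‖ ≤ c * ‖Q x‖ := by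
    intro n x hx
    apply hnc _ _ (hTpow n _ (hRpos x hx))
    have h7 := iter (n + 1) x
    have h8 : Q x - (T ^ n) (R x)
        = (∑ k ∈ Finset.range n, (T ^ k) (R x)) + (T ^ (n + 1)) (Q x) := by
      conv_lhs => rw [h7]
      rw [Finset.sum_range_succ]
      abel
    rw [h8]
    exact K.add_mem _ (hsumpos x hx n) _ (hTpow (n + 1) _ (hQpos x hx))
  have hptw : ∀ z : E, ∃ M : ℝ, ∀ n : ℕ, ‖((T ^ n).comp R) z‖ ≤ M := by
    intro z
    obtain ⟨x, hx, y, hy, rfl⟩ := hKr z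
    refine ⟨c * ‖Q x‖ + c * ‖Q y‖, fun n => ?_⟩
    have h9 : ((T ^ n).comp R) (x - y) = (T ^ n) (R x) - (T ^ n) (R y) := by simp
    rw [h9]
    calc ‖(T ^ n) (R x) - (T ^ n) (R y)‖ ≤ ‖(T ^ n) (R x)‖ + ‖(T ^ n) (R y)‖ := norm_sub_le _ _
    _ ≤ c * ‖Q x‖ + c * ‖Q y‖ := add_le_add (hbound n x hx) (hbound n y hy)
  obtain ⟨M, hM⟩ := banach_steinhaus hptw
  have hM0 : 0 ≤ M := le_trans (norm_nonneg _) (hM 0)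
  have hpow : ∀ n : ℕ, ‖T ^ (n + 1)‖ ≤ (1 / μ) * (M * ‖C‖) := by
    intro n
    apply ContinuousLinearMap.opNorm_le_bound _ (by positivity)
    intro y
    have h9 : (T ^ (n + 1)) y = (1 / μ) • (((T ^ n).comp R) (C y)) := by
      rw [pow_succ, ContinuousLinearMap.mul_apply, hTapp, map_smul]
      rfl
    have h10 : ‖((T ^ n).comp R) (C y)‖ ≤ M * (‖C‖ * ‖y‖) :=
      le_trans (((T ^ n).comp R).le_opNorm (C y))
        (mul_le_mul (hM n) (C.le_opNorm y) (norm_nonneg _) hM0)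
    have h11 := norm_smul (1 / μ) (((T ^ n).comp R) (C y))
    rw [h9, h11, Real.norm_eq_abs, abs_of_pos (by positivity : (0:ℝ) < 1 / μ)]
    calc (1 / μ) * ‖((T ^ n).comp R) (C y)‖ ≤ (1 / μ) * (M * (‖C‖ * ‖y‖)) :=
      mul_le_mul_of_nonneg_left h10 (by positivity)
    _ = (1 / μ) * (M * ‖C‖) * ‖y‖ := by ring
  obtain ⟨K0, hK0⟩ : ∃ K0 : ℝ, K0 = (1 / μ) * (M * ‖C‖) + 1 := ⟨_, rfl⟩
  have hK01 : 1 ≤ K0 := by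
    have h12 : 0 ≤ (1 / μ) * (M * ‖C‖) :=
      mul_nonneg (by positivity) (mul_nonneg hM0 (norm_nonneg _))
    rw [hK0]; linarith
  have hpow' : ∀ n : ℕ, ‖T ^ (n + 1)‖ ≤ K0 := by
    intro n
    refine le_trans (hpow n) ?_
    rw [hK0]; linarith
  have hcomp : R.comp C = μ • T := by
    rw [hT, smul_smul, mul_one_div, div_self (ne_of_gt hμ), one_smul]
  have hone : (1 : ℝ) < μ' / μ := (one_lt_div hμ).2 hμ'
  obtain ⟨n, hn⟩ := pow_unbounded_of_one_lt K0 hone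
  have hK0le : K0 ≤ (μ' / μ) ^ (n + 1) :=
    le_trans hn.le (pow_le_pow_right₀ hone.le (Nat.le_succ n))
  have hμ'pos : 0 < μ' := lt_trans hμ hμ'
  have hfin : ‖(R.comp C) ^ (n + 1)‖ ≤ μ' ^ (n + 1) := by
    have h13 : (R.comp C) ^ (n + 1) = μ ^ (n + 1) • T ^ (n + 1) := by
      rw [hcomp, smul_pow]
    have h14 := norm_smul (μ ^ (n + 1)) (T ^ (n + 1))
    rw [h13, h14, Real.norm_eq_abs, abs_of_pos (pow_pos hμ _)]
    calc μ ^ (n + 1) * ‖T ^ (n + 1)‖ ≤ μ ^ (n + 1) * K0 :=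
      mul_le_mul_of_nonneg_left (hpow' n) (le_of_lt (pow_pos hμ _))
    _ ≤ μ ^ (n + 1) * (μ' / μ) ^ (n + 1) :=
      mul_le_mul_of_nonneg_left hK0le (le_of_lt (pow_pos hμ _))
    _ = μ' ^ (n + 1) := by
        rw [div_pow]
        field_simp
  have hterm : opSpecRad (R.comp C) ≤ ‖(R.comp C) ^ (n + 1)‖ ^ ((1 : ℝ) / ((n : ℝ) + 1)) := by
    apply ciInf_le ⟨0, ?_⟩ n
    rintro x ⟨k, rfl⟩
    exact Real.rpow_nonneg (norm_nonneg _) _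
  refine le_trans hterm ?_
  have hexp : ((1 : ℝ) / ((n : ℝ) + 1)) = (((n + 1 : ℕ) : ℝ))⁻¹ := by
    push_cast
    rw [one_div]
  rw [hexp]
  calc ‖(R.comp C) ^ (n + 1)‖ ^ ((((n + 1 : ℕ)) : ℝ))⁻¹
      ≤ (μ' ^ (n + 1)) ^ ((((n + 1 : ℕ)) : ℝ))⁻¹ :=
        Real.rpow_le_rpow (norm_nonneg _) hfin (by positivity)
  _ = μ' := Real.pow_rpow_inv_natCast hμ'pos.le (Nat.succ_ne_zero n)

/-- Theorem 2.6. Let `(Θ, d)` be a metric space, `θ₀ ∈ Θ`, and `(E, E₊)` an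
ordered Banach space with normal, reproducing cone.  For each `θ ≠ θ₀`, let `B θ` be resolvent
positive with `s(B θ) < 0` and `C θ` positive bounded; assume `B θ + (1/μ) C θ` is resolvent
positive for all `μ > 0` and `θ ≠ θ₀`, and that `limsup_{θ → θ₀} s(B θ + (1/μ) C θ) < 0` for
every `μ > 0`.  Then `r(-(B θ)⁻¹ C θ) → 0` as `θ → θ₀`.
(Here `R θ = (0 - B θ)⁻¹ = -(B θ)⁻¹`.) -/
theorem spectralRadius_tendsto_zero_in_parameter
    [CompleteSpace E]
    {Θ : Type*} [MetricSpace Θ] (θ₀ : Θ)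
    (K : BanachCone E) (hKn : K.Normal) (hKr : K.Reproducing)
    (B : Θ → (E →ₗ.[ℝ] E)) (hB : ∀ θ, θ ≠ θ₀ → IsResolventPositive K (B θ))
    (hsB : ∀ θ, θ ≠ θ₀ → spectralBound (B θ) < 0)
    (C : Θ → (E →L[ℝ] E)) (hC : ∀ θ, θ ≠ θ₀ → IsPositiveOp K (C θ))
    (hBC : ∀ θ, θ ≠ θ₀ → ∀ μ : ℝ, 0 < μ →
      IsResolventPositive K (addBounded (B θ) ((1 / μ) • C θ)))
    (R : Θ → (E →L[ℝ] E)) (hR : ∀ θ, θ ≠ θ₀ → IsResolventAt (B θ) 0 (R θ))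
    (hlim : ∀ μ : ℝ, 0 < μ →
      limsup (fun θ => spectralBound (addBounded (B θ) ((1 / μ) • C θ))) (𝓝[≠] θ₀) < 0) :
    Tendsto (fun θ => opSpecRad ((R θ).comp (C θ))) (𝓝[≠] θ₀) (𝓝 0) := by
  rcases subsingleton_or_nontrivial E with hE | hE
  · have h0 : ∀ θ : Θ, opSpecRad ((R θ).comp (C θ)) = 0 := by
      intro θ
      have hz : ∀ k : ℕ,
          ‖((R θ).comp (C θ)) ^ (k + 1)‖ ^ ((1 : ℝ) / ((k : ℝ) + 1)) = 0 := by
        intro k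
        have hA : ((R θ).comp (C θ)) ^ (k + 1) = (0 : E →L[ℝ] E) := by
          ext x
          exact Subsingleton.elim _ _
        rw [hA, norm_zero,
          Real.zero_rpow (ne_of_gt (by positivity : (0:ℝ) < (1 : ℝ) / ((k : ℝ) + 1)))]
      unfold opSpecRad
      rw [iInf_congr hz]
      exact ciInf_const
    have heq : (fun θ => opSpecRad ((R θ).comp (C θ))) = fun _ => (0 : ℝ) := funext h0
    rw [heq]
    exact tendsto_const_nhds
  · rw [Metric.tendsto_nhds]
    intro ε hε
    have hμ : 0 < ε / 2 := by linarith
    have h1 := hlim (ε / 2) hμ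
    have hbdd : IsBoundedUnder (· ≤ ·) (𝓝[≠] θ₀)
        (fun θ => spectralBound (addBounded (B θ) ((1 / (ε / 2)) • C θ))) :=
      Filter.isBoundedUnder_of ⟨⊤, fun _ => le_top⟩
    have hev := eventually_lt_of_limsup_lt h1 hbdd
    have hne : ∀ᶠ θ in 𝓝[≠] θ₀, θ ≠ θ₀ := by
      filter_upwards [self_mem_nhdsWithin] with θ hθ
      exact hθ
    filter_upwards [hev, hne] with θ hsA hθ
    have hle : opSpecRad ((R θ).comp (C θ)) ≤ ε / 2 := by
      obtain ⟨_, wB, hwB⟩ := hB θ hθ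
      obtain ⟨R₀, hR₀, hR₀pos⟩ :=
        isPos_of_ray K ⟨wB, hwB⟩ (exists_resolvent_of_sb_neg (hsB θ hθ))
      have hReq : R θ = R₀ := resolvent_unique (hR θ hθ) hR₀
      obtain ⟨_, wA, hwA⟩ := hBC θ hθ (ε / 2) hμ
      obtain ⟨Q, hQ, hQpos⟩ :=
        isPos_of_ray K ⟨wA, hwA⟩ (exists_resolvent_of_sb_neg hsA)
      by_contra hcon
      push_neg at hcon
      have h2 : opSpecRad ((R θ).comp (C θ))
          ≤ (ε / 2 + opSpecRad ((R θ).comp (C θ))) / 2 := by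
        apply opSpecRad_le_of_pos K hKn hKr hμ (hR θ hθ)
          (by rw [hReq]; exact hR₀pos) (hC θ hθ) hQ hQpos
        linarith
      linarith
    rw [Real.dist_eq, sub_zero, abs_of_nonneg (opSpecRad_nonneg _)]
    linarith
end
end

section
/- Let M̃ : ℝ → ℝ^{n×n} be continuous, T-periodic, with all entries nonnegative for every t, and let {Õ(t,s)} be the evolution family of v' = M̃(t)v; write A = Õ(T,0) = (a_{ij}). If a_{i₀j₀} = 0 for some indices 1 ≤ i₀ ≠ j₀ ≤ n, then the (i₀, j₀) entry of M̃(t) is zero for all t ∈ ℝ. Moreover, if in addition M̃_{ij}(t) = |Ω|⁻¹ ∫_Ω m_{ij}(x,t) dx for a continuous matrix-valued function m = (m_{ij}) on Ω̄ × ℝ with all entries nonnegative (Ω a bounded domain, |Ω| its volume), then m_{i₀j₀}(x,t) = 0 for all (x,t) ∈ Ω̄ × ℝ. -/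
open MeasureTheory

/-- `O` is the evolution family (fundamental matrix solution) of the linear ODE `v' = A(t) v`,
recorded entrywise: `O s s = I` and `∂_t O(t,s) = A(t) O(t,s)`. -/
def IsFlow {ι : Type*} [Fintype ι] [DecidableEq ι]
    (A : ℝ → ι → ι → ℝ) (O : ℝ → ℝ → ι → ι → ℝ) : Prop :=
  (∀ s, O s s = fun i j => if i = j then (1 : ℝ) else 0) ∧
  (∀ s t i j, HasDerivAt (fun τ => O τ s i j) (∑ k, A t i k * O t s k j) t)


lemma contNonnegIntZero {f : ℝ → ℝ} (hf : Continuous f) (hnn : ∀ t, 0 ≤ f t)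
    {T : ℝ} (hT : 0 < T) (hint : (∫ t in (0:ℝ)..T, f t) = 0) :
    ∀ t ∈ Set.Icc (0:ℝ) T, f t = 0 := by
  have hI : IntegrableOn f (Set.Icc (0:ℝ) T) := hf.continuousOn.integrableOn_Icc
  have h1 : (∫ t in Set.Icc (0:ℝ) T, f t) = 0 := by
    rw [integral_Icc_eq_integral_Ioc, ← intervalIntegral.integral_of_le hT.le, hint]
  have h2 : f =ᵐ[volume.restrict (Set.Icc (0:ℝ) T)] 0 := by
    refine (setIntegral_eq_zero_iff_of_nonneg_ae ?_ hI).mp h1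
    exact Filter.Eventually.of_forall hnn
  exact Measure.eqOn_Icc_of_ae_eq (μ := volume) hT.ne h2 hf.continuousOn continuousOn_const

lemma auxMulGe {a C x : ℝ} (ha : 0 ≤ a) (haC : a ≤ C) : -(C * max (-x) 0) ≤ a * x := by
  rcases le_or_gt 0 x with h | h
  · have : max (-x) 0 = 0 := max_eq_right (by linarith)
    rw [this]; nlinarith
  · have : max (-x) 0 = -x := max_eq_left (by linarith)
    rw [this]; nlinarith

lemma mainPart1
    {n : ℕ} (T : ℝ) (hT : 0 < T)
    (Mt : ℝ → Fin n → Fin n → ℝ)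
    (hMc : ∀ i j, Continuous fun t => Mt t i j)
    (hMper : ∀ t, Mt (t + T) = Mt t)
    (hMnn : ∀ t i j, 0 ≤ Mt t i j)
    (O : ℝ → ℝ → Fin n → Fin n → ℝ)
    (hO1 : ∀ s, O s s = fun i j => if i = j then (1 : ℝ) else 0)
    (hO2 : ∀ s t i j, HasDerivAt (fun τ => O τ s i j) (∑ k, Mt t i k * O t s k j) t)
    (i₀ j₀ : Fin n) (hne : i₀ ≠ j₀) (hzero : O T 0 i₀ j₀ = 0) :
    ∀ t : ℝ, Mt t i₀ j₀ = 0 := by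
  classical
  set u : Fin n → ℝ → ℝ := fun k t => O t 0 k j₀ with hu
  have hud : ∀ k t, HasDerivAt (u k) (∑ l, Mt t k l * u l t) t := fun k t => hO2 0 t k j₀
  have hucont : ∀ k, Continuous (u k) := fun k =>
    continuous_iff_continuousAt.2 fun t => (hud k t).continuousAt
  have hdcont : ∀ k, Continuous (fun t => ∑ l, Mt t k l * u l t) := fun k =>
    continuous_finset_sum _ fun l _ => (hMc k l).mul (hucont l)
  have hu0 : ∀ k, u k 0 = if k = j₀ then 1 else 0 := by
    intro k; simp only [hu]; rw [hO1 0]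
  -- FTC representation
  have hftc : ∀ k t, u k t - u k 0 = ∫ s in (0:ℝ)..t, ∑ l, Mt s k l * u l s := by
    intro k t
    rw [intervalIntegral.integral_eq_sub_of_hasDerivAt (fun x _ => hud k x)
      ((hdcont k).intervalIntegrable 0 t)]
  -- bound C on entries of Mt over [0,T]
  obtain ⟨C, hCb⟩ : ∃ C, ∀ t ∈ Set.Icc (0:ℝ) T, ∀ k l, Mt t k l ≤ C := by
    have hFc : ContinuousOn (fun t => ∑ k : Fin n, ∑ l : Fin n, Mt t k l) (Set.Icc 0 T) :=
      (continuous_finset_sum _ fun k _ => continuous_finset_sum _ fun l _ => hMc k l).continuousOn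
    obtain ⟨C, hC⟩ := isCompact_Icc.exists_bound_of_continuousOn hFc
    refine ⟨C, fun t ht k l => ?_⟩
    have h1 : Mt t k l ≤ ∑ l : Fin n, Mt t k l :=
      Finset.single_le_sum (fun l _ => hMnn t k l) (Finset.mem_univ l)
    have h2 : (∑ l : Fin n, Mt t k l) ≤ ∑ k : Fin n, ∑ l : Fin n, Mt t k l :=
      Finset.single_le_sum (fun k _ => Finset.sum_nonneg fun l _ => hMnn t k l)
        (Finset.mem_univ k)
    have h3 := hC t ht
    have := le_abs_self (∑ k : Fin n, ∑ l : Fin n, Mt t k l)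
    rw [Real.norm_eq_abs] at h3
    linarith
  have hC0 : 0 ≤ C := le_trans (hMnn 0 i₀ j₀) (hCb 0 ⟨le_refl 0, hT.le⟩ i₀ j₀)
  set N : ℝ → ℝ := fun t => ∑ k, max (-(u k t)) 0 with hN
  have hNc : Continuous N :=
    continuous_finset_sum _ fun k _ => ((hucont k).neg).max continuous_const
  have hNnn : ∀ t, 0 ≤ N t := fun t =>
    Finset.sum_nonneg fun k _ => le_max_right _ _
  set g : ℝ → ℝ := fun t => ∫ s in (0:ℝ)..t, N s with hg
  have hgd : ∀ t, HasDerivAt g (N t) t := fun t =>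
    (hNc.integral_hasStrictDerivAt 0 t).hasDerivAt
  have hgc : Continuous g := continuous_iff_continuousAt.2 fun t => (hgd t).continuousAt
  have hgnn : ∀ t, 0 ≤ t → 0 ≤ g t := fun t ht =>
    intervalIntegral.integral_nonneg ht fun s _ => hNnn s
  set K : ℝ := n * C with hK
  -- key inequality
  have hkey : ∀ t ∈ Set.Icc (0:ℝ) T, N t ≤ K * g t := by
    intro t ht
    have hulow : ∀ k, -(C * g t) ≤ u k t := by
      intro k
      have hmono : (∫ s in (0:ℝ)..t, -C * N s) ≤ ∫ s in (0:ℝ)..t, ∑ l, Mt s k l * u l s := by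
        apply intervalIntegral.integral_mono_on ht.1
          ((continuous_const.mul hNc).intervalIntegrable 0 t)
          ((hdcont k).intervalIntegrable 0 t)
        intro s hs
        have hsT : s ∈ Set.Icc (0:ℝ) T := ⟨hs.1, le_trans hs.2 ht.2⟩
        have : -C * N s = ∑ l, -(C * max (-(u l s)) 0) := by
          rw [hN]; rw [Finset.mul_sum]; ring_nf
        show -C * N s ≤ _
        rw [this]
        exact Finset.sum_le_sum fun l _ => auxMulGe (hMnn s k l) (hCb s hsT k l)
      have hci : (∫ s in (0:ℝ)..t, -C * N s) = -C * g t := by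
        rw [intervalIntegral.integral_const_mul]
      have hftc' := hftc k t
      have hu0nn : 0 ≤ u k 0 := by rw [hu0]; positivity
      rw [hci] at hmono
      linarith
    have hterm : ∀ k, max (-(u k t)) 0 ≤ C * g t := by
      intro k
      apply max_le
      · linarith [hulow k]
      · exact mul_nonneg hC0 (hgnn t ht.1)
    calc N t ≤ ∑ _k : Fin n, C * g t := Finset.sum_le_sum fun k _ => hterm k
      _ = K * g t := by rw [Finset.sum_const, Finset.card_univ, Fintype.card_fin]; ring
  -- conclude u ≥ 0 on [0,T]
  have hunn : ∀ t ∈ Set.Icc (0:ℝ) T, ∀ k, 0 ≤ u k t := by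
    have hK0 : 0 ≤ K := by positivity
    set h : ℝ → ℝ := fun t => g t * Real.exp (-K * t) with hh
    have hhd : ∀ t, HasDerivAt h (N t * Real.exp (-K * t) + g t * (Real.exp (-K * t) * -K)) t := by
      intro t
      have he : HasDerivAt (fun t : ℝ => Real.exp (-K * t)) (Real.exp (-K * t) * -K) t := by
        have : HasDerivAt (fun t : ℝ => -K * t) (-K) t := by
          simpa using (hasDerivAt_id t).const_mul (-K)
        exact this.exp
      exact (hgd t).mul he
    have hanti : AntitoneOn h (Set.Icc 0 T) := by
      apply antitoneOn_of_deriv_nonpos (convex_Icc 0 T)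
        (continuous_iff_continuousAt.2 fun t => (hhd t).continuousAt).continuousOn
        (fun x _ => ((hhd x).differentiableAt).differentiableWithinAt)
      intro x hx
      rw [interior_Icc] at hx
      rw [(hhd x).deriv]
      have hxI : x ∈ Set.Icc (0:ℝ) T := ⟨hx.1.le, hx.2.le⟩
      have h1 := hkey x hxI
      have h2 := Real.exp_pos (-K * x)
      nlinarith
    intro t ht k
    have hg0 : g 0 = 0 := intervalIntegral.integral_same
    have hht : h t ≤ h 0 := hanti (Set.left_mem_Icc.2 hT.le) ht ht.1
    have hh0 : h 0 = 0 := by rw [hh]; simp [hg0]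
    have hgt0 : g t = 0 := by
      have he := Real.exp_pos (-K * t)
      have hht' : g t * Real.exp (-K * t) ≤ 0 := by rw [hh0] at hht; exact hht
      have hgt : g t ≤ 0 := by nlinarith [hht', he]
      linarith [hgnn t ht.1]
    have hNt : N t = 0 := by
      have h1 := hkey t ht
      rw [hgt0, mul_zero] at h1
      linarith [hNnn t]
    have : max (-(u k t)) 0 = 0 := by
      have h1 : max (-(u k t)) 0 ≤ N t :=
        Finset.single_le_sum (fun l (_ : l ∈ Finset.univ) => le_max_right (-(u l t)) 0)
          (Finset.mem_univ k)
      have := le_max_right (-(u k t)) 0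
      linarith [hNnn t, h1, le_max_right (-(u k t)) (0:ℝ)]
    nlinarith [le_max_left (-(u k t)) (0:ℝ), this]
  -- u j₀ ≥ 1 on [0,T]
  have hj1 : ∀ t ∈ Set.Icc (0:ℝ) T, 1 ≤ u j₀ t := by
    intro t ht
    have h1 : (0:ℝ) ≤ ∫ s in (0:ℝ)..t, ∑ l, Mt s j₀ l * u l s := by
      apply intervalIntegral.integral_nonneg ht.1
      intro s hs
      exact Finset.sum_nonneg fun l _ => mul_nonneg (hMnn s j₀ l)
        (hunn s ⟨hs.1, le_trans hs.2 ht.2⟩ l)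
    have h2 := hftc j₀ t
    rw [hu0] at h2; simp at h2
    linarith
  -- integral of total is 0
  have hint0 : (∫ s in (0:ℝ)..T, ∑ l, Mt s i₀ l * u l s) = 0 := by
    have h2 := hftc i₀ T
    rw [hu0] at h2
    simp [if_neg hne, hzero] at h2
    have : u i₀ T = 0 := hzero
    rw [this] at h2
    linarith [h2]
  -- entry integral is 0
  have hMint : (∫ s in (0:ℝ)..T, Mt s i₀ j₀) = 0 := by
    have hmono : (∫ s in (0:ℝ)..T, Mt s i₀ j₀) ≤ ∫ s in (0:ℝ)..T, ∑ l, Mt s i₀ l * u l s := by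
      apply intervalIntegral.integral_mono_on hT.le
        ((hMc i₀ j₀).intervalIntegrable 0 T) ((hdcont i₀).intervalIntegrable 0 T)
      intro s hs
      have h1 : Mt s i₀ j₀ * u j₀ s ≤ ∑ l, Mt s i₀ l * u l s :=
        Finset.single_le_sum (fun l _ => mul_nonneg (hMnn s i₀ l) (hunn s hs l))
          (Finset.mem_univ j₀)
      nlinarith [hj1 s hs, hMnn s i₀ j₀]
    have hpos : (0:ℝ) ≤ ∫ s in (0:ℝ)..T, Mt s i₀ j₀ :=
      intervalIntegral.integral_nonneg hT.le fun s _ => hMnn s i₀ j₀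
    rw [hint0] at hmono
    linarith
  have hzeroIcc : ∀ t ∈ Set.Icc (0:ℝ) T, Mt t i₀ j₀ = 0 :=
    contNonnegIntZero (hMc i₀ j₀) (fun t => hMnn t i₀ j₀) hT hMint
  -- extend by periodicity
  intro t
  have hper : Function.Periodic (fun t => Mt t i₀ j₀) T := fun x => by
    show Mt (x + T) i₀ j₀ = Mt x i₀ j₀
    rw [hMper]
  have h1 : Mt t i₀ j₀ = Mt (t - ⌊t / T⌋ * T) i₀ j₀ := (hper.sub_int_mul_eq ⌊t / T⌋).symm
  rw [h1]
  apply hzeroIcc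
  constructor
  · exact Int.sub_floor_div_mul_nonneg t hT
  · exact (Int.sub_floor_div_mul_lt t hT).le


lemma mainPart2
    {n : ℕ} {NN : ℕ} (Ω : Set (Fin NN → ℝ)) (hΩo : IsOpen Ω) (hΩc : IsConnected Ω)
    (hΩb : Bornology.IsBounded Ω)
    (m : (Fin NN → ℝ) → ℝ → Fin n → Fin n → ℝ)
    (Mt : ℝ → Fin n → Fin n → ℝ) (i₀ j₀ : Fin n)
    (hpart1 : ∀ t, Mt t i₀ j₀ = 0)
    (hmc : ∀ i j, ContinuousOn (fun p : (Fin NN → ℝ) × ℝ => m p.1 p.2 i j)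
      (closure Ω ×ˢ (Set.univ : Set ℝ)))
    (hmnn : ∀ x ∈ closure Ω, ∀ t i j, 0 ≤ m x t i j)
    (hrep : ∀ t i j, Mt t i j = (volume Ω).toReal⁻¹ * ∫ x in Ω, m x t i j) :
    ∀ x ∈ closure Ω, ∀ t : ℝ, m x t i₀ j₀ = 0 := by
  intro x hx t
  have hvpos : 0 < volume Ω := hΩo.measure_pos volume hΩc.nonempty
  have hvfin : volume Ω < ⊤ := hΩb.measure_lt_top
  have htR : 0 < (volume Ω).toReal := ENNReal.toReal_pos hvpos.ne' hvfin.ne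
  set f : (Fin NN → ℝ) → ℝ := fun y => m y t i₀ j₀ with hf
  have hfc : ContinuousOn f (closure Ω) := by
    have h1 : ContinuousOn (fun y : Fin NN → ℝ => (y, t)) (closure Ω) :=
      (continuous_id.prodMk continuous_const).continuousOn
    exact (hmc i₀ j₀).comp h1 (fun y hy => ⟨hy, Set.mem_univ t⟩)
  have hint0 : (∫ y in Ω, f y) = 0 := by
    have h1 := hrep t i₀ j₀
    rw [hpart1 t] at h1
    rcases mul_eq_zero.mp h1.symm with h | h
    · exact absurd h (inv_ne_zero htR.ne')
    · exact h
  have hcomp : IsCompact (closure Ω) := hΩb.isCompact_closure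
  have hI : IntegrableOn f Ω := (hfc.integrableOn_compact hcomp).mono_set subset_closure
  have hae : f =ᵐ[volume.restrict Ω] 0 := by
    refine (setIntegral_eq_zero_iff_of_nonneg_ae ?_ hI).mp hint0
    exact (ae_restrict_iff' hΩo.measurableSet).2 (Filter.Eventually.of_forall fun y hy =>
      hmnn y (subset_closure hy) t i₀ j₀)
  have hEq : Set.EqOn f 0 Ω := Measure.eqOn_open_of_ae_eq (μ := volume) hae hΩo
    (hfc.mono subset_closure) continuousOn_const
  have hnb : (nhdsWithin x Ω).NeBot := mem_closure_iff_nhdsWithin_neBot.mp hx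
  have h1 : Filter.Tendsto f (nhdsWithin x Ω) (nhds (f x)) := (hfc x hx).mono subset_closure
  have h2 : Filter.Tendsto f (nhdsWithin x Ω) (nhds 0) := by
    apply Filter.Tendsto.congr' _ tendsto_const_nhds
    exact eventually_nhdsWithin_of_forall fun y hy => (hEq hy).symm
  exact tendsto_nhds_unique h1 h2

/-- Let `M̃ : ℝ → ℝ^{n×n}` be continuous, `T`-periodic and entrywise
nonnegative, with evolution family `Õ` and period map `A = Õ(T,0)`.  If `A_{i₀j₀} = 0` for some
`i₀ ≠ j₀`, then `M̃_{i₀j₀}(t) = 0` for all `t`.  Moreover, if in addition `M̃_{ij}(t)` is the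
spatial average `|Ω|⁻¹ ∫_Ω m_{ij}(x,t) dx` of a continuous nonnegative matrix function `m` on
`Ω̄ × ℝ` (with `Ω` a bounded domain), then `m_{i₀j₀}(x,t) = 0` on `Ω̄ × ℝ`. -/
theorem zero_period_entry_implies_zero_coefficient
    {n : ℕ} (T : ℝ) (hT : 0 < T)
    (Mt : ℝ → Fin n → Fin n → ℝ)
    (hMc : ∀ i j, Continuous fun t => Mt t i j)
    (hMper : ∀ t, Mt (t + T) = Mt t)
    (hMnn : ∀ t i j, 0 ≤ Mt t i j)
    (O : ℝ → ℝ → Fin n → Fin n → ℝ)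
    (hO : IsFlow Mt O)
    (i₀ j₀ : Fin n) (hne : i₀ ≠ j₀) (hzero : O T 0 i₀ j₀ = 0) :
    (∀ t : ℝ, Mt t i₀ j₀ = 0) ∧
    (∀ (NN : ℕ) (Ω : Set (Fin NN → ℝ)), IsOpen Ω → IsConnected Ω →
      Bornology.IsBounded Ω →
      ∀ m : (Fin NN → ℝ) → ℝ → Fin n → Fin n → ℝ,
        (∀ i j, ContinuousOn (fun p : (Fin NN → ℝ) × ℝ => m p.1 p.2 i j)
          (closure Ω ×ˢ (Set.univ : Set ℝ))) →
        (∀ x ∈ closure Ω, ∀ t i j, 0 ≤ m x t i j) →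
        (∀ t i j, Mt t i j = (volume Ω).toReal⁻¹ * ∫ x in Ω, m x t i j) →
        ∀ x ∈ closure Ω, ∀ t : ℝ, m x t i₀ j₀ = 0) := by
  obtain ⟨hO1, hO2⟩ := hO
  have hpart1 := mainPart1 T hT Mt hMc hMper hMnn O hO1 hO2 i₀ j₀ hne hzero
  refine ⟨hpart1, ?_⟩
  intro NN Ω hΩo hΩc hΩb m hmc hmnn hrep
  exact mainPart2 Ω hΩo hΩc hΩb m Mt i₀ j₀ hpart1 hmc hmnn hrep
end
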